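/- arXiv:1703.08101 — 2 statements merged into one kernel-verified Lean document; each statement's English description precedes it below -/
import Mathlib

section
/- For any measurable set X ⊆ ℂ and any 0 < ρ < R, the difference | A(S_R ∩ X)/A(S_R) − (1/A(S_R)) ∫_{S_R} A(S_ρ(z) ∩ X)/A(S_ρ) dA(z) | is at most C·ρ/R for some absolute constant C, where S_r(z) denotes the axis-parallel square of side length r centered at z and S_R = S_R(0). -/
open MeasureTheory Complex

/-- The closed axis-parallel square of side length `ρ` centered at `z`. -/
def Sq (ρ : ℝ) (z : ℂ) : Set ℂ :=
  {w : ℂ | |w.re - z.re| ≤ ρ / 2 ∧ |w.im - z.im| ≤ ρ / 2}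

lemma Sq_eq_preimage (ρ : ℝ) (z : ℂ) :
    Sq ρ z = measurableEquivRealProd ⁻¹'
      (Set.Icc (z.re - ρ/2) (z.re + ρ/2) ×ˢ Set.Icc (z.im - ρ/2) (z.im + ρ/2)) := by
  ext w
  simp only [Sq, Set.mem_setOf_eq, Set.mem_preimage, Set.mem_prod, Set.mem_Icc,
    measurableEquivRealProd_apply, abs_le]
  constructor
  · rintro ⟨⟨h1, h2⟩, h3, h4⟩; exact ⟨⟨by linarith, by linarith⟩, by linarith, by linarith⟩
  · rintro ⟨⟨h1, h2⟩, h3, h4⟩; exact ⟨⟨by linarith, by linarith⟩, by linarith, by linarith⟩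

lemma measurableSet_Sq (ρ : ℝ) (z : ℂ) : MeasurableSet (Sq ρ z) := by
  rw [Sq_eq_preimage]
  exact measurableEquivRealProd.measurable (measurableSet_Icc.prod measurableSet_Icc)

lemma volume_Sq {ρ : ℝ} (hρ : 0 ≤ ρ) (z : ℂ) :
    volume (Sq ρ z) = ENNReal.ofReal (ρ^2) := by
  rw [Sq_eq_preimage,
    Complex.volume_preserving_equiv_real_prod.measure_preimage
      ((measurableSet_Icc.prod measurableSet_Icc).nullMeasurableSet)]
  rw [show (volume : Measure (ℝ × ℝ)) = (volume : Measure ℝ).prod volume from rfl,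
    Measure.prod_prod, Real.volume_Icc, Real.volume_Icc]
  rw [show z.re + ρ/2 - (z.re - ρ/2) = ρ by ring, show z.im + ρ/2 - (z.im - ρ/2) = ρ by ring,
    ← ENNReal.ofReal_mul hρ, sq]

lemma Sq_mono {r r' : ℝ} (h : r ≤ r') (z : ℂ) : Sq r z ⊆ Sq r' z := by
  rintro w ⟨h1, h2⟩
  exact ⟨by linarith, by linarith⟩

lemma mem_Sq_sub {ρ : ℝ} {z x : ℂ} : x ∈ Sq ρ z ↔ x - z ∈ Sq ρ 0 := by
  simp [Sq, sub_re, sub_im]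

lemma mem_Sq_neg {ρ : ℝ} {z x : ℂ} : x - z ∈ Sq ρ 0 ↔ z - x ∈ Sq ρ 0 := by
  simp only [Sq, Set.mem_setOf_eq, sub_re, sub_im, zero_re, zero_im, sub_zero]
  rw [abs_sub_comm x.re, abs_sub_comm x.im]

lemma indicator_Sq (ρ : ℝ) (z x : ℂ) :
    (Sq ρ z).indicator (1 : ℂ → ENNReal) x = (Sq ρ 0).indicator 1 (x - z) := by
  by_cases h : x ∈ Sq ρ z
  · rw [Set.indicator_of_mem h, Set.indicator_of_mem (mem_Sq_sub.mp h)]; rfl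
  · rw [Set.indicator_of_notMem h, Set.indicator_of_notMem (fun hc => h (mem_Sq_sub.mpr hc))]

lemma vol_inter_eq (ρ : ℝ) (z : ℂ) (X : Set ℂ) :
    volume (Sq ρ z ∩ X) = ∫⁻ x in X, (Sq ρ 0).indicator 1 (x - z) := by
  have h : ∫⁻ x in X, (Sq ρ 0).indicator 1 (x - z)
      = ∫⁻ x in X, (Sq ρ z).indicator 1 x :=
    lintegral_congr fun x => (indicator_Sq ρ z x).symm
  rw [h, lintegral_indicator (measurableSet_Sq ρ z)]
  simp [Measure.restrict_restrict (measurableSet_Sq ρ z), Set.inter_comm]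

lemma meas_uncurry (ρ : ℝ) :
    Measurable (fun p : ℂ × ℂ => (Sq ρ 0).indicator (1 : ℂ → ENNReal) (p.2 - p.1)) :=
  (measurable_one.indicator (measurableSet_Sq ρ 0)).comp (measurable_snd.sub measurable_fst)

lemma meas_vol (ρ : ℝ) (X : Set ℂ) :
    Measurable (fun z : ℂ => volume (Sq ρ z ∩ X)) := by
  have h : (fun z : ℂ => volume (Sq ρ z ∩ X))
      = fun z => ∫⁻ x, (fun p : ℂ × ℂ => (Sq ρ 0).indicator 1 (p.2 - p.1)) (z, x)
          ∂(volume.restrict X) := by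
    ext z; exact vol_inter_eq ρ z X
  rw [h]
  exact (meas_uncurry ρ).lintegral_prod_right'

lemma key_swap (ρ R : ℝ) (X : Set ℂ) :
    ∫⁻ z in Sq R 0, volume (Sq ρ z ∩ X) = ∫⁻ x in X, volume (Sq ρ x ∩ Sq R 0) := by
  have h1 : ∫⁻ z in Sq R 0, volume (Sq ρ z ∩ X)
      = ∫⁻ z in Sq R 0, ∫⁻ x in X, (Sq ρ 0).indicator 1 (x - z) :=
    lintegral_congr fun z => vol_inter_eq ρ z X
  have h2 : ∫⁻ x in X, volume (Sq ρ x ∩ Sq R 0)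
      = ∫⁻ x in X, ∫⁻ z in Sq R 0, (Sq ρ 0).indicator 1 (x - z) := by
    refine lintegral_congr fun x => ?_
    rw [vol_inter_eq ρ x (Sq R 0)]
    refine lintegral_congr fun z => ?_
    by_cases h : z - x ∈ Sq ρ 0
    · rw [Set.indicator_of_mem h, Set.indicator_of_mem (mem_Sq_neg.mpr h)]; rfl
    · rw [Set.indicator_of_notMem h,
        Set.indicator_of_notMem (fun hc => h (mem_Sq_neg.mp hc))]
  rw [h1, h2]
  exact lintegral_lintegral_swap ((meas_uncurry ρ).aemeasurable)

lemma set_lintegral_indicator_one (s t : Set ℂ) (hs : MeasurableSet s) :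
    ∫⁻ x in t, s.indicator (1 : ℂ → ENNReal) x = volume (s ∩ t) := by
  rw [lintegral_indicator hs]
  simp [Measure.restrict_restrict hs]

lemma Sq_subset_of_mem_inner {ρ R : ℝ} {x : ℂ} (hx : x ∈ Sq (R - ρ) 0) :
    Sq ρ x ⊆ Sq R 0 := by
  obtain ⟨hx1, hx2⟩ := hx
  rintro w ⟨h1, h2⟩
  simp only [Sq, Set.mem_setOf_eq, zero_re, zero_im, sub_zero] at *
  constructor
  · have := abs_sub_le w.re x.re 0
    simp only [sub_zero] at this
    linarith
  · have := abs_sub_le w.im x.im 0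
    simp only [sub_zero] at this
    linarith

lemma Sq_inter_empty_of_not_mem_outer {ρ R : ℝ} {x : ℂ} (hx : x ∉ Sq (R + ρ) 0) :
    Sq ρ x ∩ Sq R 0 = ∅ := by
  rw [Set.eq_empty_iff_forall_notMem]
  rintro w ⟨⟨h1, h2⟩, h3, h4⟩
  apply hx
  simp only [Sq, Set.mem_setOf_eq, zero_re, zero_im, sub_zero] at *
  constructor
  · have := abs_sub_le x.re w.re 0
    simp only [sub_zero] at this
    rw [abs_sub_comm] at h1
    linarith
  · have := abs_sub_le x.im w.im 0
    simp only [sub_zero] at this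
    rw [abs_sub_comm] at h2
    linarith

theorem stmt1 :
    ∃ C > (0:ℝ), ∀ (X : Set ℂ), MeasurableSet X → ∀ ρ R : ℝ, 0 < ρ → ρ < R →
      |(volume (Sq R 0 ∩ X)).toReal / (volume (Sq R 0)).toReal -
        (volume (Sq R 0)).toReal⁻¹ *
          ∫ z in Sq R 0, (volume (Sq ρ z ∩ X)).toReal / (volume (Sq ρ 0)).toReal|
      ≤ C * ρ / R := by
  refine ⟨4, by norm_num, ?_⟩
  intro X hX ρ R hρ hR
  have hR0 : 0 < R := hρ.trans hR
  set c : ENNReal := ENNReal.ofReal (ρ^2) with hc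
  have hcfin : c ≠ ⊤ := ENNReal.ofReal_ne_top
  -- functions
  set u : ℂ → ENNReal := fun x => volume (Sq ρ x ∩ Sq R 0) with hu
  set v : ℂ → ENNReal := fun x => c * (Sq R 0).indicator 1 x with hv
  set w : ℂ → ENNReal := fun x => c * ((Sq (R+ρ) 0) \ (Sq (R-ρ) 0)).indicator 1 x with hw
  have hub : ∀ x : ℂ, u x ≤ c := fun x =>
    le_of_le_of_eq (measure_mono Set.inter_subset_left) (volume_Sq hρ.le x)
  have hvb : ∀ x : ℂ, v x ≤ c := by
    intro x
    by_cases h : x ∈ Sq R 0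
    · simp [hv, Set.indicator_of_mem h]
    · simp [hv, Set.indicator_of_notMem h]
  have huv : ∀ x : ℂ, u x ≤ v x + w x := by
    intro x
    by_cases hin : x ∈ Sq (R - ρ) 0
    · have h1 : u x = c := by
        rw [hu]
        simp only
        rw [Set.inter_eq_left.mpr (Sq_subset_of_mem_inner hin), volume_Sq hρ.le]
      have h2 : v x = c := by
        have : x ∈ Sq R 0 := Sq_mono (by linarith) 0 hin
        simp [hv, Set.indicator_of_mem this]
      rw [h1, ← h2]; exact le_self_add
    by_cases hout : x ∈ Sq (R + ρ) 0
    · have h3 : w x = c := by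
        simp [hw, Set.indicator_of_mem (Set.mem_diff_of_mem hout hin)]
      calc u x ≤ c := hub x
        _ = w x := h3.symm
        _ ≤ v x + w x := le_add_self
    · have h1 : u x = 0 := by
        rw [hu]; simp only
        rw [Sq_inter_empty_of_not_mem_outer hout, measure_empty]
      rw [h1]; exact zero_le
  have hvu : ∀ x : ℂ, v x ≤ u x + w x := by
    intro x
    by_cases hin : x ∈ Sq (R - ρ) 0
    · have h1 : u x = c := by
        rw [hu]; simp only
        rw [Set.inter_eq_left.mpr (Sq_subset_of_mem_inner hin), volume_Sq hρ.le]
      calc v x ≤ c := hvb x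
        _ = u x := h1.symm
        _ ≤ u x + w x := le_self_add
    by_cases hout : x ∈ Sq (R + ρ) 0
    · have h3 : w x = c := by
        simp [hw, Set.indicator_of_mem (Set.mem_diff_of_mem hout hin)]
      calc v x ≤ c := hvb x
        _ = w x := h3.symm
        _ ≤ u x + w x := le_add_self
    · have h2 : v x = 0 := by
        have : x ∉ Sq R 0 := fun h => hout (Sq_mono (by linarith) 0 h)
        simp [hv, Set.indicator_of_notMem this]
      rw [h2]; exact zero_le
  -- the three lintegrals
  set A : ENNReal := ∫⁻ x in X, u x with hA
  set B : ENNReal := ∫⁻ x in X, v x with hB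
  set W : ENNReal := ∫⁻ x in X, w x with hW
  have hBval : B = c * volume (Sq R 0 ∩ X) := by
    rw [hB, hv]
    rw [lintegral_const_mul c (measurable_one.indicator (measurableSet_Sq R 0))]
    rw [set_lintegral_indicator_one _ _ (measurableSet_Sq R 0)]
  have hannulus : volume ((Sq (R+ρ) 0) \ (Sq (R-ρ) 0)) = ENNReal.ofReal (4*R*ρ) := by
    rw [measure_diff (Sq_mono (by linarith) 0) (measurableSet_Sq (R-ρ) 0).nullMeasurableSet
      (by rw [volume_Sq (by linarith : (0:ℝ) ≤ R - ρ)]; exact ENNReal.ofReal_ne_top),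
      volume_Sq (by linarith : (0:ℝ) ≤ R + ρ), volume_Sq (by linarith : (0:ℝ) ≤ R - ρ),
      ← ENNReal.ofReal_sub _ (sq_nonneg _)]
    congr 1
    ring
  have hWle : W ≤ c * ENNReal.ofReal (4*R*ρ) := by
    calc W ≤ ∫⁻ x, w x := setLIntegral_le_lintegral X w
      _ = c * ∫⁻ x, ((Sq (R+ρ) 0) \ (Sq (R-ρ) 0)).indicator 1 x := by
          rw [hw]
          exact lintegral_const_mul c (measurable_one.indicator
            ((measurableSet_Sq (R+ρ) 0).diff (measurableSet_Sq (R-ρ) 0)))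
      _ = c * volume ((Sq (R+ρ) 0) \ (Sq (R-ρ) 0)) := by
          rw [lintegral_indicator_one ((measurableSet_Sq (R+ρ) 0).diff (measurableSet_Sq (R-ρ) 0))]
      _ = c * ENNReal.ofReal (4*R*ρ) := by rw [hannulus]
  have hWfin : W ≠ ⊤ := ne_top_of_le_ne_top (ENNReal.mul_ne_top hcfin ENNReal.ofReal_ne_top) hWle
  have hBfin : B ≠ ⊤ := by
    rw [hBval]
    exact ENNReal.mul_ne_top hcfin
      (ne_top_of_le_ne_top ENNReal.ofReal_ne_top
        (le_of_le_of_eq (measure_mono Set.inter_subset_left) (volume_Sq hR0.le 0)))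
  have hAB : A ≤ B + W := by
    rw [hA, hB, hW, ← lintegral_add_left' ((measurable_one.indicator
      (measurableSet_Sq R 0)).const_mul c).aemeasurable]
    exact lintegral_mono huv
  have hBA : B ≤ A + W := by
    rw [hA, hB, hW, ← lintegral_add_left' ((meas_vol ρ (Sq R 0)).aemeasurable)]
    exact lintegral_mono hvu
  have hAfin : A ≠ ⊤ :=
    ne_top_of_le_ne_top (ENNReal.add_ne_top.mpr ⟨hBfin, hWfin⟩) hAB
  -- toReal estimates
  have habs : |B.toReal - A.toReal| ≤ W.toReal := by
    rw [abs_sub_le_iff]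
    constructor
    · have := ENNReal.toReal_mono (ENNReal.add_ne_top.mpr ⟨hAfin, hWfin⟩) hBA
      rw [ENNReal.toReal_add hAfin hWfin] at this
      linarith
    · have := ENNReal.toReal_mono (ENNReal.add_ne_top.mpr ⟨hBfin, hWfin⟩) hAB
      rw [ENNReal.toReal_add hBfin hWfin] at this
      linarith
  have hWreal : W.toReal ≤ ρ^2 * (4*R*ρ) := by
    have := ENNReal.toReal_mono (ENNReal.mul_ne_top hcfin ENNReal.ofReal_ne_top) hWle
    rwa [ENNReal.toReal_mul, hc, ENNReal.toReal_ofReal (sq_nonneg ρ),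
      ENNReal.toReal_ofReal (by positivity : (0:ℝ) ≤ 4*R*ρ)] at this
  have hBreal : B.toReal = ρ^2 * (volume (Sq R 0 ∩ X)).toReal := by
    rw [hBval, ENNReal.toReal_mul, hc, ENNReal.toReal_ofReal (sq_nonneg ρ)]
  -- the Bochner integral
  have hint : ∫ z in Sq R 0, (volume (Sq ρ z ∩ X)).toReal
      = (∫⁻ z in Sq R 0, volume (Sq ρ z ∩ X)).toReal := by
    refine integral_toReal ((meas_vol ρ X).aemeasurable) (ae_of_all _ fun z => ?_)
    exact lt_of_le_of_lt
      (le_of_le_of_eq (measure_mono Set.inter_subset_left) (volume_Sq hρ.le z))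
      (ENNReal.ofReal_lt_top)
  have hswap : (∫⁻ z in Sq R 0, volume (Sq ρ z ∩ X)) = A := by
    rw [hA, hu]; exact key_swap ρ R X
  -- rewrite everything
  rw [volume_Sq hρ.le 0, volume_Sq hR0.le 0, ENNReal.toReal_ofReal (sq_nonneg ρ),
    ENNReal.toReal_ofReal (sq_nonneg R)]
  have hintdiv : ∫ z in Sq R 0, (volume (Sq ρ z ∩ X)).toReal / ρ^2
      = A.toReal / ρ^2 := by
    rw [integral_div, hint, hswap]
  rw [hintdiv]
  set a : ℝ := (volume (Sq R 0 ∩ X)).toReal with ha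
  have hρ2 : (0:ℝ) < ρ^2 := by positivity
  have hR2 : (0:ℝ) < R^2 := by positivity
  have heq : a / R^2 - (R^2)⁻¹ * (A.toReal / ρ^2)
      = (ρ^2 * a - A.toReal) / (R^2 * ρ^2) := by
    field_simp
  rw [heq, abs_div, abs_of_pos (by positivity : (0:ℝ) < R^2 * ρ^2),
    div_le_iff₀ (by positivity : (0:ℝ) < R^2 * ρ^2)]
  have hnum : |ρ^2 * a - A.toReal| ≤ ρ^2 * (4*R*ρ) := by
    calc |ρ^2 * a - A.toReal| = |B.toReal - A.toReal| := by rw [hBreal, ha]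
      _ ≤ W.toReal := habs
      _ ≤ ρ^2 * (4*R*ρ) := hWreal
  calc |ρ^2 * a - A.toReal| ≤ ρ^2 * (4*R*ρ) := hnum
    _ = 4 * ρ / R * (R^2 * ρ^2) := by field_simp
end

section
/- Let u be subharmonic on a neighborhood of the closed disk D of radius r centered at z₀, with u ≥ 0, u(z₀) = M > 0, and u ≤ b·M on D for some b with 1 < b < 4/3. Let 0 < c < 4 − 3b and set D* = {z ∈ D : u(z) ≥ c·M}. Then A(D*)/A(D) ≥ (1−c)/(b−c) > 3/4. -/
open MeasureTheory Metric Complex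

theorem stmt5 (u : ℂ → ℝ) (z₀ : ℂ) (r M b c : ℝ) (hr : 0 < r)
    (V : Set ℂ) (hV : IsOpen V) (hDV : closedBall z₀ r ⊆ V)
    (hcont : ContinuousOn u V)
    (hsub : ∀ w ρ, 0 < ρ → closedBall w ρ ⊆ V → u w ≤ ⨍ x in closedBall w ρ, u x)
    (hnn : ∀ w ∈ V, 0 ≤ u w)
    (hM : u z₀ = M) (hM0 : 0 < M)
    (hb1 : 1 < b) (hb2 : b < 4 / 3) (hub : ∀ w ∈ closedBall z₀ r, u w ≤ b * M)
    (hc0 : 0 < c) (hc : c < 4 - 3 * b) :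
    (1 - c) / (b - c) ≤
      (volume {w ∈ closedBall z₀ r | c * M ≤ u w}).toReal /
        (volume (closedBall z₀ r)).toReal
    ∧ (3 : ℝ) / 4 < (1 - c) / (b - c) := by
  have hbc : c < b := by nlinarith
  set D : Set ℂ := closedBall z₀ r with hD
  set S : Set ℂ := {w ∈ closedBall z₀ r | c * M ≤ u w} with hS
  have hSD : S ⊆ D := fun x hx => hx.1
  have hcontD : ContinuousOn u D := hcont.mono hDV
  have hScl : IsClosed S := by
    have := hcontD.preimage_isClosed_of_isClosed (Metric.isClosed_closedBall)
      (isClosed_Ici (a := c * M))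
    simpa [hS, hD, Set.inter_def, Set.preimage] using this
  have hSm : MeasurableSet S := hScl.measurableSet
  have hDfin : volume D ≠ ⊤ := (measure_closedBall_lt_top).ne
  have hSfin : volume S ≠ ⊤ := ((measure_mono hSD).trans_lt measure_closedBall_lt_top).ne
  have hDpos : 0 < (volume D).toReal := by
    refine ENNReal.toReal_pos ?_ hDfin
    exact (measure_closedBall_pos volume z₀ hr).ne'
  set ν : ℝ := (volume D).toReal
  set s : ℝ := (volume S).toReal
  have hsν : s ≤ ν := ENNReal.toReal_mono hDfin (measure_mono hSD)
  have hint : IntegrableOn u D := hcontD.integrableOn_compact (isCompact_closedBall _ _)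
  -- mean value inequality
  have havg : M ≤ (volume D).toReal⁻¹ • ∫ x in D, u x := by
    have := hsub z₀ r hr hDV
    rwa [hM, setAverage_eq] at this
  have hMν : M * ν ≤ ∫ x in D, u x := by
    rw [smul_eq_mul] at havg
    calc M * ν ≤ ((volume D).toReal⁻¹ * ∫ x in D, u x) * ν := by
          exact mul_le_mul_of_nonneg_right havg hDpos.le
      _ = ∫ x in D, u x := by field_simp; exact mul_div_cancel_right₀ _ hDpos.ne'
  -- split integral
  have hsplit : ∫ x in D, u x = (∫ x in S, u x) + ∫ x in D \ S, u x := by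
    have := integral_inter_add_diff (μ := volume) (f := u) (s := D) (t := S) hSm hint
    rw [Set.inter_eq_self_of_subset_right hSD] at this
    linarith [this]
  have hIS : ∫ x in S, u x ≤ b * M * s := by
    calc ∫ x in S, u x ≤ ∫ _x in S, b * M := by
          refine setIntegral_mono_on (hint.mono_set hSD) (integrableOn_const hSfin) hSm
            (fun x hx => hub x hx.1)
      _ = s * (b * M) := by simp [s, setIntegral_const, measureReal_def]
      _ = b * M * s := by ring
  have hvolDS : (volume (D \ S)).toReal = ν - s := by
    rw [measure_diff hSD hSm.nullMeasurableSet hSfin,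
      ENNReal.toReal_sub_of_le (measure_mono hSD) hDfin]
  have hIDS : ∫ x in D \ S, u x ≤ c * M * (ν - s) := by
    calc ∫ x in D \ S, u x ≤ ∫ _x in D \ S, c * M := by
          refine setIntegral_mono_on (hint.mono_set Set.diff_subset)
            (integrableOn_const ((measure_mono Set.diff_subset).trans_lt
              measure_closedBall_lt_top).ne) (Metric.isClosed_closedBall.measurableSet.diff hSm)
            (fun x hx => ?_)
          · have : ¬ (c * M ≤ u x) := fun h => hx.2 ⟨hx.1, h⟩
            linarith
      _ = (ν - s) * (c * M) := by rw [setIntegral_const, smul_eq_mul, measureReal_def, hvolDS]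
      _ = c * M * (ν - s) := by ring
  have key : (1 - c) * ν ≤ (b - c) * s := by
    have h1 : M * ν ≤ b * M * s + c * M * (ν - s) := by
      rw [hsplit] at hMν; linarith
    nlinarith
  constructor
  · rw [div_le_div_iff₀ (by linarith) hDpos]
    nlinarith
  · rw [div_lt_div_iff₀ (by norm_num) (by linarith)]
    nlinarith
end
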